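/- Let E = EuclideanSpace ℝ (Fin n), μ a Borel probability measure on E satisfying the standing integrability assumption, and u ∈ E with ‖u‖ < 1. Let Q ⊆ E be the u-quantile set of μ, let (X_i)_{i∈ℕ} be i.i.d. with law μ on (Ω, P), and fix ε > 0. Then for P-almost every ω there exists N₁(ω) < ∞ such that for all N ≥ N₁(ω), every minimizer p of the empirical loss p ↦ (1/N) ∑_{i=0}^{N−1} ρ_u(X_i(ω), p) satisfies infDist(p, Q) < ε; i.e., the sample u-quantile set of (X_0(ω), …, X_{N−1}(ω)) is contained in {p : infDist(p, Q) < ε}. (Euclidean case of Theorem 4.1(a).) -/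

import Mathlib

open MeasureTheory Filter Topology

/-- The data-based geometric quantile loss in Euclidean space:
`ρ_u(x,p) = ‖p − x‖ − ⟪u, p − x⟫`. -/
noncomputable def quantileLoss {n : ℕ} (u x p : EuclideanSpace ℝ (Fin n)) : ℝ :=
  ‖p - x‖ - inner ℝ u (p - x)

variable {n : ℕ}
local notation "E" => EuclideanSpace ℝ (Fin n)

lemma ql_lower (u x p : E) : (1 - ‖u‖) * ‖p - x‖ ≤ quantileLoss u x p := by
  have h := abs_real_inner_le_norm u (p - x)
  have := abs_le.1 h
  unfold quantileLoss; nlinarith [norm_nonneg (p - x)]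

lemma ql_abs_le (u x p : E) (hu : ‖u‖ ≤ 1) : |quantileLoss u x p| ≤ 2 * ‖p - x‖ := by
  have h := abs_le.1 (abs_real_inner_le_norm u (p - x))
  unfold quantileLoss
  rw [abs_le]; constructor <;> nlinarith [norm_nonneg (p - x)]

lemma ql_lip (u x p q : E) (hu : ‖u‖ ≤ 1) :
    |quantileLoss u x p - quantileLoss u x q| ≤ 2 * ‖p - q‖ := by
  have h1 : quantileLoss u x p - quantileLoss u x q
      = (‖p - x‖ - ‖q - x‖) - inner ℝ u (p - q) := by
    unfold quantileLoss
    have : (p - x) - (q - x) = p - q := by abel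
    rw [← this, inner_sub_right]
    simp [inner_sub_right]; ring
  have h2 := abs_le.1 (abs_real_inner_le_norm u (p - q))
  have h3 := abs_le.1 (abs_norm_sub_norm_le (p - x) (q - x))
  have h4 : (p - x) - (q - x) = p - q := by abel
  rw [h4] at h3
  rw [h1, abs_le]; constructor <;> nlinarith [norm_nonneg (p - q)]

lemma ql_cont (u p : E) : Continuous fun x : E => quantileLoss u x p := by
  unfold quantileLoss
  exact (continuous_const.sub continuous_id).norm.sub
    ((continuous_const.inner (continuous_const.sub continuous_id)))

lemma ql_nonneg (u x p : E) (hu : ‖u‖ ≤ 1) : 0 ≤ quantileLoss u x p := by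
  have := ql_lower u x p
  nlinarith [norm_nonneg (p - x)]

lemma integrable_norm_of_assumption (μ : Measure E) [IsProbabilityMeasure μ]
    (u₀ p₀ : E) (hu₀ : ‖u₀‖ < 1) (hint : Integrable (fun x => quantileLoss u₀ x p₀) μ) :
    Integrable (fun x : E => ‖x‖) μ := by
  have c0 : (0:ℝ) < 1 - ‖u₀‖ := by linarith
  have h1 : Integrable (fun x : E => ‖p₀ - x‖) μ := by
    refine Integrable.mono' (hint.const_mul (1 - ‖u₀‖)⁻¹)
      ((continuous_const.sub continuous_id).norm.aestronglyMeasurable) ?_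
    refine Eventually.of_forall fun x => ?_
    rw [Real.norm_eq_abs, abs_of_nonneg (norm_nonneg _)]
    rw [inv_mul_eq_div, le_div_iff₀ c0]
    nlinarith [ql_lower u₀ x p₀]
  have h2 : Integrable (fun x : E => ‖p₀ - x‖ + ‖p₀‖) μ := h1.add (integrable_const _)
  refine Integrable.mono' h2 continuous_norm.aestronglyMeasurable ?_
  refine Eventually.of_forall fun x => ?_
  rw [Real.norm_eq_abs, abs_of_nonneg (norm_nonneg _)]
  have : x = p₀ - (p₀ - x) := by abel
  calc ‖x‖ = ‖p₀ - (p₀ - x)‖ := by rw [← this]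
  _ ≤ ‖p₀‖ + ‖p₀ - x‖ := norm_sub_le _ _
  _ = ‖p₀ - x‖ + ‖p₀‖ := by ring

lemma integrable_ql (μ : Measure E) [IsProbabilityMeasure μ]
    (hn : Integrable (fun x : E => ‖x‖) μ) (u p : E) (hu : ‖u‖ ≤ 1) :
    Integrable (fun x => quantileLoss u x p) μ := by
  refine Integrable.mono' ((hn.const_mul 2).add (integrable_const (2 * ‖p‖)))
    ((ql_cont u p).aestronglyMeasurable) ?_
  refine Eventually.of_forall fun x => ?_
  rw [Real.norm_eq_abs]
  calc |quantileLoss u x p| ≤ 2 * ‖p - x‖ := ql_abs_le u x p hu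
  _ ≤ 2 * (‖p‖ + ‖x‖) := by nlinarith [norm_sub_le p x]
  _ = 2 * ‖x‖ + 2 * ‖p‖ := by ring


lemma G_lip (μ : Measure E) [IsProbabilityMeasure μ] (hn : Integrable (fun x : E => ‖x‖) μ) (u : E) (hu : ‖u‖ ≤ 1) (p q : E) :
    |(∫ x, quantileLoss u x p ∂μ) - ∫ x, quantileLoss u x q ∂μ| ≤ 2 * ‖p - q‖ := by
  rw [← integral_sub (integrable_ql μ hn u p hu) (integrable_ql μ hn u q hu)]
  calc |∫ x, (quantileLoss u x p - quantileLoss u x q) ∂μ|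
      ≤ ∫ x, |quantileLoss u x p - quantileLoss u x q| ∂μ := by
        simpa [Real.norm_eq_abs] using
          norm_integral_le_integral_norm (fun x => quantileLoss u x p - quantileLoss u x q) (μ := μ)
  _ ≤ ∫ _x, 2 * ‖p - q‖ ∂μ :=
        integral_mono_of_nonneg (Eventually.of_forall fun x => abs_nonneg _)
          (integrable_const _) (Eventually.of_forall fun x => ql_lip u x p q hu)
  _ = 2 * ‖p - q‖ := by simp

lemma G_cont (μ : Measure E) [IsProbabilityMeasure μ] (hn : Integrable (fun x : E => ‖x‖) μ) (u : E) (hu : ‖u‖ ≤ 1) :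
    Continuous fun p : E => ∫ x, quantileLoss u x p ∂μ := by
  have : LipschitzWith 2 fun p : E => ∫ x, quantileLoss u x p ∂μ := by
    refine LipschitzWith.of_dist_le_mul fun p q => ?_
    rw [Real.dist_eq, dist_eq_norm]
    simpa using G_lip μ hn u hu p q
  exact this.continuous

lemma G_lower (μ : Measure E) [IsProbabilityMeasure μ] (hn : Integrable (fun x : E => ‖x‖) μ) (u : E) (hu : ‖u‖ ≤ 1) (p : E) :
    (1 - ‖u‖) * ‖p‖ - (1 - ‖u‖) * (∫ x, ‖x‖ ∂μ) ≤ ∫ x, quantileLoss u x p ∂μ := by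
  have h : ∀ x : E, (1 - ‖u‖) * ‖p‖ - (1 - ‖u‖) * ‖x‖ ≤ quantileLoss u x p := by
    intro x
    have h1 := ql_lower u x p
    have h2 : ‖p‖ - ‖x‖ ≤ ‖p - x‖ := norm_sub_norm_le p x
    nlinarith [norm_nonneg (p - x)]
  have hint2 : Integrable (fun x : E => (1 - ‖u‖) * ‖p‖ - (1 - ‖u‖) * ‖x‖) μ :=
    (integrable_const _).sub (hn.const_mul _)
  calc (1 - ‖u‖) * ‖p‖ - (1 - ‖u‖) * (∫ x, ‖x‖ ∂μ)
      = ∫ x, ((1 - ‖u‖) * ‖p‖ - (1 - ‖u‖) * ‖x‖) ∂μ := by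
        rw [integral_sub (integrable_const _) (hn.const_mul _)]
        simp [integral_const_mul]
  _ ≤ ∫ x, quantileLoss u x p ∂μ :=
        integral_mono hint2 (integrable_ql μ hn u p hu) h

lemma G_nonneg (μ : Measure E) [IsProbabilityMeasure μ] (u : E) (hu : ‖u‖ ≤ 1) (p : E) : 0 ≤ ∫ x, quantileLoss u x p ∂μ :=
  integral_nonneg fun x => ql_nonneg u x p hu

lemma G_exists_min (μ : Measure E) [IsProbabilityMeasure μ] (hn : Integrable (fun x : E => ‖x‖) μ) (u : E) (hu : ‖u‖ < 1) :
    ∃ q : E, ∀ p : E, ∫ x, quantileLoss u x q ∂μ ≤ ∫ x, quantileLoss u x p ∂μ := by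
  set c := 1 - ‖u‖ with hc
  have hc0 : (0:ℝ) < c := by rw [hc]; linarith
  set G := fun p : E => ∫ x, quantileLoss u x p ∂μ with hG
  set M := ∫ x, ‖x‖ ∂μ with hM
  have hM0 : 0 ≤ M := integral_nonneg fun x => norm_nonneg x
  set R := (G 0) / c + M + 1 with hR
  have hG0 : 0 ≤ G 0 := G_nonneg μ u hu.le 0
  have hR0 : 0 ≤ R := by positivity
  have hcpt : IsCompact (Metric.closedBall (0:E) R) := isCompact_closedBall _ _
  obtain ⟨q, hqmem, hqmin⟩ := hcpt.exists_isMinOn (f := G) ⟨0, by simp [hR0]⟩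
    ((G_cont μ hn u hu.le).continuousOn)
  refine ⟨q, fun p => ?_⟩
  by_cases hp : p ∈ Metric.closedBall (0:E) R
  · exact hqmin hp
  · have hnorm : R < ‖p‖ := by
      simpa [Metric.mem_closedBall, dist_zero_right] using hp
    have h1 : G q ≤ G 0 := hqmin (by simp [hR0])
    have h2 := G_lower μ hn u hu.le p
    have h3 : c * R - c * M = G 0 + c := by rw [hR, mul_add, mul_add, show c * (G 0 / c) = G 0 by field_simp]; ring
    show G q ≤ G p
    nlinarith


lemma F_lip (u : E) (hu : ‖u‖ ≤ 1) (N : ℕ) (x : ℕ → E) (p q : E) :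
    |(N:ℝ)⁻¹ * ∑ i ∈ Finset.range N, quantileLoss u (x i) p
      - (N:ℝ)⁻¹ * ∑ i ∈ Finset.range N, quantileLoss u (x i) q| ≤ 2 * ‖p - q‖ := by
  rw [← mul_sub, ← Finset.sum_sub_distrib, abs_mul]
  have h1 : |∑ i ∈ Finset.range N, (quantileLoss u (x i) p - quantileLoss u (x i) q)|
      ≤ ∑ i ∈ Finset.range N, (2 * ‖p - q‖) := by
    refine (Finset.abs_sum_le_sum_abs _ _).trans ?_
    exact Finset.sum_le_sum fun i _ => ql_lip u (x i) p q hu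
  rw [Finset.sum_const, Finset.card_range, nsmul_eq_mul] at h1
  rcases Nat.eq_zero_or_pos N with h | h
  · simp [h]
  · have hN : (0:ℝ) < N := by exact_mod_cast h
    calc |(N:ℝ)⁻¹| * |∑ i ∈ Finset.range N, (quantileLoss u (x i) p - quantileLoss u (x i) q)|
        ≤ (N:ℝ)⁻¹ * ((N:ℝ) * (2 * ‖p - q‖)) := by
          rw [abs_of_nonneg (by positivity : (0:ℝ) ≤ (N:ℝ)⁻¹)]
          exact mul_le_mul_of_nonneg_left h1 (by positivity)
    _ = 2 * ‖p - q‖ := by field_simp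

lemma F_lower (u : E) (hu : ‖u‖ ≤ 1) (N : ℕ) (hN : 1 ≤ N) (x : ℕ → E) (p : E) :
    (1 - ‖u‖) * ‖p‖ - (1 - ‖u‖) * ((N:ℝ)⁻¹ * ∑ i ∈ Finset.range N, ‖x i‖)
      ≤ (N:ℝ)⁻¹ * ∑ i ∈ Finset.range N, quantileLoss u (x i) p := by
  have hNpos : (0:ℝ) < N := by exact_mod_cast hN
  have h1 : ∑ i ∈ Finset.range N, ((1 - ‖u‖) * ‖p‖ - (1 - ‖u‖) * ‖x i‖)
      ≤ ∑ i ∈ Finset.range N, quantileLoss u (x i) p := by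
    refine Finset.sum_le_sum fun i _ => ?_
    have h1 := ql_lower u (x i) p
    have h2 : ‖p‖ - ‖x i‖ ≤ ‖p - x i‖ := norm_sub_norm_le p (x i)
    nlinarith [norm_nonneg (p - x i)]
  have h2 : ∑ i ∈ Finset.range N, ((1 - ‖u‖) * ‖p‖ - (1 - ‖u‖) * ‖x i‖)
      = (N:ℝ) * ((1 - ‖u‖) * ‖p‖) - (1 - ‖u‖) * ∑ i ∈ Finset.range N, ‖x i‖ := by
    rw [Finset.sum_sub_distrib, Finset.sum_const, Finset.card_range, nsmul_eq_mul,
      ← Finset.mul_sum]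
  have := mul_le_mul_of_nonneg_left h1 (by positivity : (0:ℝ) ≤ (N:ℝ)⁻¹)
  rw [h2, mul_sub, ← mul_assoc, inv_mul_cancel₀ hNpos.ne', one_mul] at this
  calc (1 - ‖u‖) * ‖p‖ - (1 - ‖u‖) * ((N:ℝ)⁻¹ * ∑ i ∈ Finset.range N, ‖x i‖)
      = (1 - ‖u‖) * ‖p‖ - (N:ℝ)⁻¹ * ((1 - ‖u‖) * ∑ i ∈ Finset.range N, ‖x i‖) := by ring
  _ ≤ (N:ℝ)⁻¹ * ∑ i ∈ Finset.range N, quantileLoss u (x i) p := this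

lemma slln_comp {Ω : Type*} [MeasurableSpace Ω] (P : Measure Ω) [IsProbabilityMeasure P]
    (μ : Measure E) [IsProbabilityMeasure μ]
    (X : ℕ → Ω → E) (hXmeas : ∀ i, Measurable (X i))
    (hXindep : ProbabilityTheory.iIndepFun X P)
    (hXlaw : ∀ i, P.map (X i) = μ)
    (g : E → ℝ) (hgc : Continuous g) (hgint : Integrable g μ) :
    ∀ᵐ ω ∂P, Tendsto (fun N : ℕ => (∑ i ∈ Finset.range N, g (X i ω)) / N)
      atTop (𝓝 (∫ x, g x ∂μ)) := by
  have hint0 : Integrable (fun ω => g (X 0 ω)) P := by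
    have h : Integrable g (P.map (X 0)) := by rw [hXlaw 0]; exact hgint
    exact (integrable_map_measure hgc.aestronglyMeasurable
      (hXmeas 0).aemeasurable).mp h
  have hindep : Pairwise (Function.onFun (ProbabilityTheory.IndepFun · · P) fun i ω => g (X i ω)) :=
    fun i j hij => (hXindep.indepFun hij).comp hgc.measurable hgc.measurable
  have hident : ∀ i, ProbabilityTheory.IdentDistrib (fun ω => g (X i ω))
      (fun ω => g (X 0 ω)) P P := by
    intro i
    have base : ProbabilityTheory.IdentDistrib (X i) (X 0) P P :=
      ⟨(hXmeas i).aemeasurable, (hXmeas 0).aemeasurable, by rw [hXlaw i, hXlaw 0]⟩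
    exact base.comp hgc.measurable
  have hmean : ∫ ω, g (X 0 ω) ∂P = ∫ x, g x ∂μ := by
    rw [← hXlaw 0, integral_map (hXmeas 0).aemeasurable hgc.aestronglyMeasurable]
  have := ProbabilityTheory.strong_law_ae_real (fun i ω => g (X i ω)) hint0 hindep hident
  rw [hmean] at this
  exact this

/-- Euclidean case of Theorem 4.1(a): almost surely, the sample `u`-quantile set is
eventually contained in any `ε`-neighbourhood of the population `u`-quantile set. -/
theorem sample_quantiles_eventually_near_population_quantiles
    {n : ℕ} (μ : Measure (EuclideanSpace ℝ (Fin n))) [IsProbabilityMeasure μ]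
    (hμint : ∃ (u₀ p₀ : EuclideanSpace ℝ (Fin n)), ‖u₀‖ < 1 ∧
      Integrable (fun x => quantileLoss u₀ x p₀) μ)
    (u : EuclideanSpace ℝ (Fin n)) (hu : ‖u‖ < 1)
    (Q : Set (EuclideanSpace ℝ (Fin n)))
    (hQ : Q = {q : EuclideanSpace ℝ (Fin n) | ∀ p, ∫ x, quantileLoss u x q ∂μ
        ≤ ∫ x, quantileLoss u x p ∂μ})
    {Ω : Type*} [MeasurableSpace Ω] (P : Measure Ω) [IsProbabilityMeasure P]
    (X : ℕ → Ω → EuclideanSpace ℝ (Fin n))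
    (hXmeas : ∀ i, Measurable (X i))
    (hXindep : ProbabilityTheory.iIndepFun X P)
    (hXlaw : ∀ i, P.map (X i) = μ)
    (ε : ℝ) (hε : 0 < ε) :
    ∀ᵐ ω ∂P, ∃ N₁ : ℕ, ∀ N ≥ N₁,
      ∀ p : EuclideanSpace ℝ (Fin n),
        (∀ p' : EuclideanSpace ℝ (Fin n),
          (N : ℝ)⁻¹ * ∑ i ∈ Finset.range N, quantileLoss u (X i ω) p
            ≤ (N : ℝ)⁻¹ * ∑ i ∈ Finset.range N, quantileLoss u (X i ω) p') →
        Metric.infDist p Q < ε := by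
  classical
  obtain ⟨u₀, p₀, hu₀, hint₀⟩ := hμint
  have hn : Integrable (fun x : EuclideanSpace ℝ (Fin n) => ‖x‖) μ :=
    integrable_norm_of_assumption μ u₀ p₀ hu₀ hint₀
  set c : ℝ := 1 - ‖u‖ with hc
  have hc0 : (0:ℝ) < c := by rw [hc]; linarith
  set G : EuclideanSpace ℝ (Fin n) → ℝ := fun p => ∫ x, quantileLoss u x p ∂μ with hG
  set M : ℝ := ∫ x, ‖x‖ ∂μ with hMdef
  have hM0 : 0 ≤ M := integral_nonneg fun x => norm_nonneg x
  obtain ⟨qs, hqs⟩ := G_exists_min μ hn u hu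
  set m : ℝ := G qs with hm
  have hm0 : 0 ≤ m := G_nonneg μ u hu.le qs
  set R : ℝ := (m + 1) / c + M + 1 with hR
  have hcr : c * ((m + 1) / c) = m + 1 := by field_simp
  -- qs is in the ball
  have hqsball : qs ∈ Metric.closedBall (0:EuclideanSpace ℝ (Fin n)) R := by
    rw [mem_closedBall_zero_iff]
    have h2 : c * ‖qs‖ - c * M ≤ m := G_lower μ hn u hu.le qs
    have hcR : c * R = (m + 1) + c * M + c := by rw [hR, mul_add, mul_add, hcr]; ring
    have h3 : c * ‖qs‖ ≤ c * R := by linarith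
    exact le_of_mul_le_mul_left h3 hc0
  -- the compact exceptional set and the gap δ₀
  set K : Set (EuclideanSpace ℝ (Fin n)) := Metric.closedBall (0:EuclideanSpace ℝ (Fin n)) R ∩ {p : EuclideanSpace ℝ (Fin n) | ε ≤ Metric.infDist p Q} with hK
  have hKcpt : IsCompact K :=
    (isCompact_closedBall _ _).inter_right
      (isClosed_le continuous_const (Metric.continuous_infDist_pt Q))
  have hgap : ∃ δ₀ > (0:ℝ), ∀ p ∈ K, m + δ₀ ≤ G p := by
    by_cases hKe : K.Nonempty
    · obtain ⟨pk, hpkK, hpkmin⟩ := hKcpt.exists_isMinOn hKe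
        ((G_cont μ hn u hu.le).continuousOn)
      have hpknQ : pk ∉ Q := by
        intro hpkQ
        have h0 : Metric.infDist pk Q = 0 := Metric.infDist_zero_of_mem hpkQ
        have := hpkK.2
        rw [Set.mem_setOf_eq, h0] at this
        linarith
      have hpkgt : m < G pk := by
        rw [hQ, Set.mem_setOf_eq] at hpknQ
        push_neg at hpknQ
        obtain ⟨p', hp'⟩ := hpknQ
        have h1 : m ≤ G p' := hqs p'
        have h2 : G p' < G pk := hp'
        linarith
      exact ⟨G pk - m, by linarith, fun p hp => by
        have h : G pk ≤ G p := hpkmin hp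
        linarith⟩
    · exact ⟨1, one_pos, fun p hp => absurd ⟨p, hp⟩ hKe⟩
  obtain ⟨δ₀, hδ₀pos, hδ₀⟩ := hgap
  set η : ℝ := min (δ₀ / 20) (1 / 5) with hη
  have hη0 : 0 < η := by
    apply lt_min (by linarith) (by norm_num)
  have hη1 : η ≤ δ₀ / 20 := min_le_left _ _
  have hη2 : η ≤ 1 / 5 := min_le_right _ _
  -- dense sequence and finite net
  obtain ⟨s, hs⟩ := TopologicalSpace.exists_dense_seq (EuclideanSpace ℝ (Fin n))
  have hcover : Metric.closedBall (0:EuclideanSpace ℝ (Fin n)) R ⊆ ⋃ k : ℕ, Metric.ball (s k) η := by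
    intro p _
    obtain ⟨k, hk⟩ := hs.exists_dist_lt p hη0
    exact Set.mem_iUnion.2 ⟨k, by simpa [Metric.mem_ball, dist_comm] using hk⟩
  obtain ⟨T, hT⟩ := (isCompact_closedBall (0:EuclideanSpace ℝ (Fin n)) R).elim_finite_subcover
    (fun k => Metric.ball (s k) η) (fun k => Metric.isOpen_ball) hcover
  -- almost sure events
  have hA0 := slln_comp P μ X hXmeas hXindep hXlaw (fun x : EuclideanSpace ℝ (Fin n) => ‖x‖) continuous_norm hn
  have hAk : ∀ᵐ ω ∂P, ∀ k : ℕ,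
      Tendsto (fun N : ℕ => (∑ i ∈ Finset.range N, quantileLoss u (X i ω) (s k)) / N)
        atTop (𝓝 (G (s k))) := by
    rw [ae_all_iff]
    intro k
    exact slln_comp P μ X hXmeas hXindep hXlaw (fun x => quantileLoss u x (s k))
      (ql_cont u (s k)) (integrable_ql μ hn u (s k) hu.le)
  filter_upwards [hA0, hAk] with ω hω0 hωk
  -- eventual bounds
  have hev1 : ∀ᶠ N : ℕ in atTop, |(∑ i ∈ Finset.range N, ‖X i ω‖) / N - M| < 1 := by
    obtain ⟨N₀, h⟩ := Metric.tendsto_atTop.mp hω0 1 one_pos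
    exact eventually_atTop.2 ⟨N₀, fun N hN => by simpa [Real.dist_eq] using h N hN⟩
  have hev2 : ∀ k ∈ T, ∀ᶠ N : ℕ in atTop,
      |(∑ i ∈ Finset.range N, quantileLoss u (X i ω) (s k)) / N - G (s k)| < η := by
    intro k _
    obtain ⟨N₀, h⟩ := Metric.tendsto_atTop.mp (hωk k) η hη0
    exact eventually_atTop.2 ⟨N₀, fun N hN => by simpa [Real.dist_eq] using h N hN⟩
  have hev : ∀ᶠ N : ℕ in atTop, 1 ≤ N ∧
      |(∑ i ∈ Finset.range N, ‖X i ω‖) / N - M| < 1 ∧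
      ∀ k ∈ T, |(∑ i ∈ Finset.range N, quantileLoss u (X i ω) (s k)) / N - G (s k)| < η :=
    (eventually_ge_atTop 1).and (hev1.and ((T.eventually_all).2 hev2))
  obtain ⟨N₁, hN₁⟩ := eventually_atTop.1 hev
  refine ⟨N₁, fun N hN p hmin => ?_⟩
  obtain ⟨hN1, hnorm, hnet⟩ := hN₁ N hN
  have hNpos : (0:ℝ) < N := by exact_mod_cast hN1
  -- uniform closeness on the ball
  have hunif : ∀ p' ∈ Metric.closedBall (0:EuclideanSpace ℝ (Fin n)) R,
      |(N:ℝ)⁻¹ * ∑ i ∈ Finset.range N, quantileLoss u (X i ω) p' - G p'| ≤ 5 * η := by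
    intro p' hp'
    obtain ⟨k, hkT, hkmem⟩ := Set.mem_iUnion₂.1 (hT hp')
    have hd : ‖p' - s k‖ < η := by
      rw [← dist_eq_norm]; exact Metric.mem_ball.1 hkmem
    have l1 := F_lip u hu.le N (fun i => X i ω) p' (s k)
    have l2 := hnet k hkT
    have l3 : |G (s k) - G p'| ≤ 2 * ‖s k - p'‖ := G_lip μ hn u hu.le (s k) p'
    simp only [inv_mul_eq_div] at *
    have e1 : (∑ i ∈ Finset.range N, quantileLoss u (X i ω) p') / N - G p'
        = ((∑ i ∈ Finset.range N, quantileLoss u (X i ω) p') / N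
            - (∑ i ∈ Finset.range N, quantileLoss u (X i ω) (s k)) / N)
          + ((∑ i ∈ Finset.range N, quantileLoss u (X i ω) (s k)) / N - G (s k))
          + (G (s k) - G p') := by ring
    rw [e1]
    have := abs_add_three
      ((∑ i ∈ Finset.range N, quantileLoss u (X i ω) p') / N
        - (∑ i ∈ Finset.range N, quantileLoss u (X i ω) (s k)) / N)
      ((∑ i ∈ Finset.range N, quantileLoss u (X i ω) (s k)) / N - G (s k))
      (G (s k) - G p')
    have hnorm2 : ‖s k - p'‖ = ‖p' - s k‖ := by rw [norm_sub_rev]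
    rw [hnorm2] at l3
    calc _ ≤ _ := this
    _ ≤ 2 * ‖p' - s k‖ + η + 2 * ‖p' - s k‖ := by
        refine add_le_add (add_le_add l1 l2.le) l3
    _ ≤ 5 * η := by nlinarith
  -- minimizer estimate at qs
  have hq1 : (N:ℝ)⁻¹ * ∑ i ∈ Finset.range N, quantileLoss u (X i ω) qs ≤ m + 5 * η := by
    have h0 : |(N:ℝ)⁻¹ * ∑ i ∈ Finset.range N, quantileLoss u (X i ω) qs - m| ≤ 5 * η :=
      hunif qs hqsball
    have := abs_le.1 h0
    linarith [this.2]
  have hFp : (N:ℝ)⁻¹ * ∑ i ∈ Finset.range N, quantileLoss u (X i ω) p ≤ m + 1 := by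
    have h1 := hmin qs
    have h5 : 5 * η ≤ 1 := by linarith
    linarith
  clear_value c G M m R
  -- p is in the ball
  have hpball : p ∈ Metric.closedBall (0:EuclideanSpace ℝ (Fin n)) R := by
    rw [mem_closedBall_zero_iff]
    have hlow := F_lower u hu.le N hN1 (fun i => X i ω) p
    beta_reduce at hlow
    rw [← hc] at hlow
    have hA : (N:ℝ)⁻¹ * ∑ i ∈ Finset.range N, ‖X i ω‖ ≤ M + 1 := by
      rw [inv_mul_eq_div]
      have := abs_le.1 hnorm.le
      linarith [this.2]
    have hcR : c * R = (m + 1) + c * M + c := by rw [hR, mul_add, mul_add, hcr]; ring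
    have h3 : c * ‖p‖ ≤ c * R := by linarith [mul_le_mul_of_nonneg_left hA hc0.le, hlow, hFp]
    exact le_of_mul_le_mul_left h3 hc0
  -- conclude
  have hGp : G p < m + δ₀ := by
    have h2 := hunif p hpball
    have h3 := (abs_le.1 h2).1
    have : G p ≤ m + 1 + 5 * η := by linarith
    have h10 : G p ≤ m + 10 * η := by
      have := hmin qs
      linarith [(abs_le.1 (hunif p hpball)).1]
    nlinarith
  by_contra hcon
  push_neg at hcon
  have hpK : p ∈ K := ⟨hpball, hcon⟩
  have := hδ₀ p hpK
  linarith
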